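/- If an inclusion t ≤ s between lattice terms fails in some distributive lattice, then it fails in the two-element lattice. -/

import Mathlib

inductive LatTerm (X : Type*) where
  | var : X → LatTerm X
  | top : LatTerm X
  | bot : LatTerm X
  | meet : LatTerm X → LatTerm X → LatTerm X
  | join : LatTerm X → LatTerm X → LatTerm X

def LatTerm.eval {X : Type*} {L : Type*} [Lattice L] [BoundedOrder L]
    (v : X → L) : LatTerm X → L
  | .var x => v x
  | .top => ⊤
  | .bot => ⊥
  | .meet t s => t.eval v ⊓ s.eval v
  | .join t s => t.eval v ⊔ s.eval v

/-- If an inclusion `t ≤ s` fails in some distributive (bounded) lattice, then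
it fails in the two-element lattice `Bool`. -/
theorem stmt1 {X : Type*} (t s : LatTerm X) (L : Type*)
    [DistribLattice L] [BoundedOrder L]
    (h : ∃ v : X → L, ¬ t.eval v ≤ s.eval v) :
    ∃ w : X → Bool, ¬ t.eval w ≤ s.eval w := by
  obtain ⟨v, hv⟩ := h
  set a := t.eval v
  set b := s.eval v
  have hdisj : Disjoint ((Order.PFilter.principal a : Order.PFilter L) : Set L)
      ((Order.Ideal.principal b : Order.Ideal L) : Set L) := by
    rw [Set.disjoint_left]
    intro x hx hx'
    exact hv (le_trans (Order.PFilter.mem_principal.mp hx) (Order.Ideal.mem_principal.mp hx'))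
  obtain ⟨J, hJprime, hbJ, hJF⟩ :=
    DistribLattice.prime_ideal_of_disjoint_filter_ideal hdisj
  classical
  have htop : (⊤ : L) ∉ J := fun hT => hJprime.toIsProper.ne_top (by
    ext x; constructor <;> intro _ <;> first | trivial | exact J.lower le_top hT)
  have key : ∀ u : LatTerm X, u.eval (fun x => decide (v x ∉ J)) = decide (u.eval v ∉ J) := by
    intro u
    induction u with
    | var x => rfl
    | top => simp [LatTerm.eval, htop]
    | bot => simp [LatTerm.eval, J.bot_mem]
    | meet p q hp hq =>
        simp only [LatTerm.eval, hp, hq]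
        have : p.eval v ⊓ q.eval v ∈ J ↔ p.eval v ∈ J ∨ q.eval v ∈ J := by
          constructor
          · exact hJprime.mem_or_mem
          · rintro (h | h)
            · exact J.lower inf_le_left h
            · exact J.lower inf_le_right h
        by_cases h1 : p.eval v ∈ J <;> by_cases h2 : q.eval v ∈ J <;>
          simp_all [this]
    | join p q hp hq =>
        simp only [LatTerm.eval, hp, hq]
        have : p.eval v ⊔ q.eval v ∈ J ↔ p.eval v ∈ J ∧ q.eval v ∈ J := by
          constructor
          · intro h; exact ⟨J.lower le_sup_left h, J.lower le_sup_right h⟩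
          · rintro ⟨h1, h2⟩; exact Order.Ideal.sup_mem h1 h2
        by_cases h1 : p.eval v ∈ J <;> by_cases h2 : q.eval v ∈ J <;>
          simp_all [this]
  refine ⟨fun x => decide (v x ∉ J), ?_⟩
  have haJ : a ∉ J := Set.disjoint_left.mp hJF (Order.PFilter.mem_principal.mpr le_rfl)
  have hbJ' : b ∈ J := hbJ (Order.Ideal.mem_principal.mpr le_rfl)
  rw [key t, key s]
  simp [show t.eval v ∉ J from haJ, show s.eval v ∈ J from hbJ']
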